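/- Let T be a triangulated category, S a thick subcategory with a stable t-structure S = X ⊥ Y (a torsion pair with X[1] = X), and T with torsion pairs T = X ⊥ X^⊥ = ^⊥Y ⊥ Y. Then X, Y and Z := X^⊥ ∩ ^⊥Y are thick subcategories of T, P := X[1] ∩ Y = 0, T = X ⊥ Z ⊥ Y is a weak semi-orthogonal decomposition, and the composition Z ⊂ T → T/S is a triangle equivalence. -/

import Mathlib

open CategoryTheory Limits Pretriangulated ZeroObject

namespace IY

variable {T : Type*} [Category T] [Preadditive T] [HasZeroObject T] [HasShift T ℤ]
  [∀ n : ℤ, (shiftFunctor T n).Additive] [Pretriangulated T]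

/-- Right Hom-orthogonal: `A^⊥`. -/
def rightPerp (A : Set T) : Set T := {Y | ∀ X ∈ A, ∀ f : X ⟶ Y, f = 0}

/-- Left Hom-orthogonal: `^⊥B`. -/
def leftPerp (B : Set T) : Set T := {X | ∀ Y ∈ B, ∀ f : X ⟶ Y, f = 0}

/-- The shift `A[n]` of a class of objects. -/
def shiftSet (A : Set T) (n : ℤ) : Set T := (fun X => (X⟦n⟧ : T)) '' A

/-- `Hom(A, B) = 0`. -/
def homOrth (A B : Set T) : Prop := ∀ X ∈ A, ∀ Y ∈ B, ∀ f : X ⟶ Y, f = 0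

/-- `A * B`: objects `E` admitting a distinguished triangle `A → E → B → A[1]`
with `A ∈ A`, `B ∈ B`. -/
def starSet (A B : Set T) : Set T :=
  {E | ∃ (a b : T) (_ : a ∈ A) (_ : b ∈ B) (f : a ⟶ E) (g : E ⟶ b)
    (h : b ⟶ a⟦(1 : ℤ)⟧), Triangle.mk f g h ∈ distTriang T}

/-- A torsion pair `S = A ⊥ B` on the class of objects `S`:
`S = A * B`, `Hom(A,B) = 0`, `A = ^⊥B ∩ S` and `B = A^⊥ ∩ S`. -/
structure IsTorsionPair (S A B : Set T) : Prop where
  subA : A ⊆ S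
  subB : B ⊆ S
  orth : homOrth A B
  ext : S ⊆ starSet A B
  eqA : A = leftPerp B ∩ S
  eqB : B = rightPerp A ∩ S

/-- A thick subcategory: closed under isomorphisms, shifts, extensions (cones) and
direct summands (retracts), and contains the zero object. -/
structure IsThick (S : Set T) : Prop where
  zero : (0 : T) ∈ S
  iso : ∀ ⦃X Y : T⦄, (X ≅ Y) → X ∈ S → Y ∈ S
  shift : ∀ X ∈ S, ∀ n : ℤ, (X⟦n⟧ : T) ∈ S
  ext₂ : ∀ Tr : Triangle T, Tr ∈ (distTriang T) → Tr.obj₁ ∈ S → Tr.obj₃ ∈ S → Tr.obj₂ ∈ S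
  retract : ∀ ⦃X Y : T⦄ (i : X ⟶ Y) (r : Y ⟶ X), i ≫ r = 𝟙 X → Y ∈ S → X ∈ S

/-- The class of morphisms whose cone lies in `S`; the Verdier quotient `T/S` is the
localization of `T` at this class. -/
def qis (S : Set T) : MorphismProperty T := fun X Y f =>
  ∃ (Z : T) (g : Y ⟶ Z) (h : Z ⟶ X⟦(1 : ℤ)⟧),
    Triangle.mk f g h ∈ (distTriang T) ∧ Z ∈ S

/-- A morphism factors through an object of `P`. -/
def factorsThrough (P : Set T) {M N : T} (f : M ⟶ N) : Prop :=
  ∃ (P₀ : T) (_ : P₀ ∈ P) (g : M ⟶ P₀) (h : P₀ ⟶ N), g ≫ h = f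



section Basics

variable {X Y : Set T}

lemma shift_hom_zero {x y : T} {m n : ℤ} (hmn : n + m = 0)
    (h : ∀ g : (x⟦m⟧ : T) ⟶ y, g = 0) (f : x ⟶ (y⟦n⟧ : T)) : f = 0 := by
  have hg := h ((shiftFunctor T m).map f ≫ (shiftFunctorCompIsoId T n m hmn).hom.app y)
  have h0 : (shiftFunctor T m).map f = 0 := by
    have := congrArg (fun p => p ≫ (shiftFunctorCompIsoId T n m hmn).inv.app y) hg
    simpa using this
  apply (shiftFunctor T m).map_injective
  rw [h0, Functor.map_zero]

lemma shift_hom_zero' {x y : T} {m n : ℤ} (hmn : n + m = 0)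
    (h : ∀ g : x ⟶ (y⟦m⟧ : T), g = 0) (f : (x⟦n⟧ : T) ⟶ y) : f = 0 := by
  have hg := h ((shiftFunctorCompIsoId T n m hmn).inv.app x ≫ (shiftFunctor T m).map f)
  have h0 : (shiftFunctor T m).map f = 0 := by
    have := congrArg (fun p => (shiftFunctorCompIsoId T n m hmn).hom.app x ≫ p) hg
    simpa using this
  apply (shiftFunctor T m).map_injective
  rw [h0, Functor.map_zero]

lemma shift_mem_of_one {A : Set T}
    (hiso : ∀ ⦃a b : T⦄, (a ≅ b) → a ∈ A → b ∈ A)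
    (hsh : shiftSet A 1 = A) :
    ∀ a ∈ A, ∀ n : ℤ, (a⟦n⟧ : T) ∈ A := by
  have h1 : ∀ a ∈ A, (a⟦(1:ℤ)⟧ : T) ∈ A := fun a ha => hsh ▸ ⟨a, ha, rfl⟩
  have hm1 : ∀ a ∈ A, (a⟦(-1:ℤ)⟧ : T) ∈ A := by
    intro a ha
    have : a ∈ shiftSet A 1 := hsh.symm ▸ ha
    obtain ⟨b, hb, rfl⟩ := this
    exact hiso ((shiftFunctorCompIsoId T (1:ℤ) (-1:ℤ) (by omega)).app b).symm hb
  intro a ha n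
  induction n using Int.induction_on with
  | zero => exact hiso ((shiftFunctorZero T ℤ).app a).symm ha
  | succ i hi =>
      exact hiso ((shiftFunctorAdd' T (i : ℤ) 1 ((i : ℤ)+1) rfl).app a).symm (h1 _ hi)
  | pred i hi =>
      exact hiso ((shiftFunctorAdd' T (-(i:ℤ)) (-1) (-(i:ℤ)-1) (by omega)).app a).symm (hm1 _ hi)

lemma rightPerp_iso {a b : T} (e : a ≅ b) (ha : a ∈ rightPerp X) : b ∈ rightPerp X := by
  intro x hx f
  have h0 := ha x hx (f ≫ e.inv)
  have : f = (f ≫ e.inv) ≫ e.hom := by simp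
  rw [this, h0, zero_comp]

lemma leftPerp_iso {a b : T} (e : a ≅ b) (ha : a ∈ leftPerp X) : b ∈ leftPerp X := by
  intro y hy f
  have h0 := ha y hy (e.hom ≫ f)
  have : f = e.inv ≫ (e.hom ≫ f) := by simp
  rw [this, h0, comp_zero]

lemma rightPerp_shift (hX : ∀ x ∈ X, ∀ n : ℤ, (x⟦n⟧ : T) ∈ X) :
    ∀ w ∈ rightPerp X, ∀ n : ℤ, (w⟦n⟧ : T) ∈ rightPerp X := by
  intro w hw n x hx f
  exact shift_hom_zero (m := -n) (by omega) (fun g => hw _ (hX x hx (-n)) g) f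

lemma leftPerp_shift (hY : ∀ y ∈ Y, ∀ n : ℤ, (y⟦n⟧ : T) ∈ Y) :
    ∀ l ∈ leftPerp Y, ∀ n : ℤ, (l⟦n⟧ : T) ∈ leftPerp Y := by
  intro l hl n y hy f
  exact shift_hom_zero' (m := -n) (by omega) (fun g => hl _ (hY y hy (-n)) g) f

lemma rightPerp_ext (Tr : Triangle T) (hTr : Tr ∈ distTriang T)
    (h1 : Tr.obj₁ ∈ rightPerp X) (h3 : Tr.obj₃ ∈ rightPerp X) : Tr.obj₂ ∈ rightPerp X := by
  intro x hx f
  obtain ⟨g, hg⟩ := Triangle.coyoneda_exact₂ Tr hTr f (h3 x hx _)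
  rw [hg, h1 x hx g, zero_comp]

lemma leftPerp_ext (Tr : Triangle T) (hTr : Tr ∈ distTriang T)
    (h1 : Tr.obj₁ ∈ leftPerp Y) (h3 : Tr.obj₃ ∈ leftPerp Y) : Tr.obj₂ ∈ leftPerp Y := by
  intro y hy f
  obtain ⟨g, hg⟩ := Triangle.yoneda_exact₂ Tr hTr f (h1 y hy _)
  rw [hg, h3 y hy g, comp_zero]

lemma rightPerp_zero : (0 : T) ∈ rightPerp X :=
  fun _ _ f => (isZero_zero T).eq_of_tgt f 0

lemma leftPerp_zero : (0 : T) ∈ leftPerp Y :=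
  fun _ _ f => (isZero_zero T).eq_of_src f 0

lemma rightPerp_retract {a b : T} (i : a ⟶ b) (r : b ⟶ a) (hir : i ≫ r = 𝟙 a)
    (hb : b ∈ rightPerp X) : a ∈ rightPerp X := by
  intro x hx f
  have : f = (f ≫ i) ≫ r := by rw [Category.assoc, hir, Category.comp_id]
  rw [this, hb x hx (f ≫ i), zero_comp]

lemma leftPerp_retract {a b : T} (i : a ⟶ b) (r : b ⟶ a) (hir : i ≫ r = 𝟙 a)
    (hb : b ∈ leftPerp Y) : a ∈ leftPerp Y := by
  intro y hy f
  have : f = i ≫ (r ≫ f) := by rw [← Category.assoc, hir, Category.id_comp]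
  rw [this, hb y hy (r ≫ f), comp_zero]

lemma mem_rightPerp_obj₁ {l w y : T} (hw : w ∈ rightPerp X) (hy : y ∈ Y)
    (hYsh : ∀ y' ∈ Y, ∀ n : ℤ, (y'⟦n⟧ : T) ∈ Y) (hXY : homOrth X Y)
    {u : l ⟶ w} {v : w ⟶ y} {w3 : y ⟶ l⟦(1:ℤ)⟧}
    (hT : Triangle.mk u v w3 ∈ distTriang T) : l ∈ rightPerp X := by
  intro x hx f
  have h0 : f ≫ u = 0 := hw x hx _
  obtain ⟨g, hg⟩ := Triangle.coyoneda_exact₂ _ (inv_rot_of_distTriang _ hT) f h0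
  have hg0 : g = 0 := hXY x hx _ (hYsh y hy (-1)) g
  rw [hg, hg0, zero_comp]
  rfl

end Basics

section Constr

variable {X Y : Set T}

/-- Data of a decomposition triangle `a → A → b → a⟦1⟧` with `a ∈ P`, `b ∈ Q`. -/
structure Dec (P Q : Set T) (A : T) where
  a : T
  b : T
  ha : a ∈ P
  hb : b ∈ Q
  ι : a ⟶ A
  π : A ⟶ b
  δ : b ⟶ a⟦(1:ℤ)⟧
  mem : Triangle.mk ι π δ ∈ distTriang T

lemma nonempty_dec {P Q : Set T} {A : T} (hA : A ∈ starSet P Q) : Nonempty (Dec P Q A) := by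
  obtain ⟨a, b, ha, hb, f, g, h, m⟩ := hA
  exact ⟨⟨a, b, ha, hb, f, g, h, m⟩⟩

noncomputable def decOf {P Q : Set T} {A : T} (hA : A ∈ starSet P Q) : Dec P Q A :=
  (nonempty_dec hA).some

lemma B1exist {A w' : T} (D : Dec X (rightPerp X) A) (hw' : w' ∈ rightPerp X) (φ : A ⟶ w') :
    ∃ ψ : D.b ⟶ w', D.π ≫ ψ = φ := by
  obtain ⟨ψ, hψ⟩ := Triangle.yoneda_exact₂ _ D.mem φ (hw' D.a D.ha (D.ι ≫ φ))
  exact ⟨ψ, hψ.symm⟩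

lemma B1uniq {A w' : T} (D : Dec X (rightPerp X) A) (hw' : w' ∈ rightPerp X)
    (hXsh : ∀ x ∈ X, ∀ n : ℤ, (x⟦n⟧ : T) ∈ X)
    {ψ ψ' : D.b ⟶ w'} (h : D.π ≫ ψ = D.π ≫ ψ') : ψ = ψ' := by
  have h0 : D.π ≫ (ψ - ψ') = 0 := by rw [Preadditive.comp_sub, h, sub_self]
  obtain ⟨g, hg⟩ := Triangle.yoneda_exact₃ _ D.mem (ψ - ψ') h0
  have hg0 : g = 0 := hw' _ (hXsh D.a D.ha 1) g
  have : ψ - ψ' = 0 := by rw [hg, hg0, comp_zero]; rfl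
  exact sub_eq_zero.mp this

lemma B2exist {w z' : T} (D : Dec (leftPerp Y) Y w) (hz' : z' ∈ leftPerp Y) (φ : z' ⟶ w) :
    ∃ ψ : z' ⟶ D.a, ψ ≫ D.ι = φ := by
  obtain ⟨ψ, hψ⟩ := Triangle.coyoneda_exact₂ _ D.mem φ (hz' D.b D.hb (φ ≫ D.π))
  exact ⟨ψ, hψ.symm⟩

lemma B2uniq {w z' : T} (D : Dec (leftPerp Y) Y w) (hz' : z' ∈ leftPerp Y)
    (hYsh : ∀ y ∈ Y, ∀ n : ℤ, (y⟦n⟧ : T) ∈ Y)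
    {ψ ψ' : z' ⟶ D.a} (h : ψ ≫ D.ι = ψ' ≫ D.ι) : ψ = ψ' := by
  have h0 : (ψ - ψ') ≫ D.ι = 0 := by rw [Preadditive.sub_comp, h, sub_self]
  obtain ⟨g, hg⟩ := Triangle.coyoneda_exact₂ _ (inv_rot_of_distTriang _ D.mem) (ψ - ψ')
    h0
  have hg0 : g = 0 := hz' _ (hYsh D.b D.hb (-1)) g
  have : ψ - ψ' = 0 := by rw [hg, hg0, zero_comp]; rfl
  exact sub_eq_zero.mp this

/-- The hypotheses needed for the construction of the section functor. -/
structure Setup (X Y : Set T) : Prop where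
  hXsh : ∀ x ∈ X, ∀ n : ℤ, (x⟦n⟧ : T) ∈ X
  hYsh : ∀ y ∈ Y, ∀ n : ℤ, (y⟦n⟧ : T) ∈ Y
  orth : homOrth X Y
  dec2 : ∀ A : T, A ∈ starSet X (rightPerp X)
  dec3 : ∀ A : T, A ∈ starSet (leftPerp Y) Y

variable (C : Setup X Y)

noncomputable def wdec (A : T) : Dec X (rightPerp X) A := decOf (C.dec2 A)

noncomputable def zdec (A : T) : Dec (leftPerp Y) Y (wdec C A).b := decOf (C.dec3 _)

lemma zmem (A : T) : (zdec C A).a ∈ rightPerp X :=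
  mem_rightPerp_obj₁ (wdec C A).hb (zdec C A).hb C.hYsh C.orth (zdec C A).mem

lemma zmemZ (A : T) : (zdec C A).a ∈ rightPerp X ∩ leftPerp Y :=
  ⟨zmem C A, (zdec C A).ha⟩

noncomputable def wmap {A B : T} (f : A ⟶ B) : (wdec C A).b ⟶ (wdec C B).b :=
  (B1exist (wdec C A) (wdec C B).hb (f ≫ (wdec C B).π)).choose

lemma wmap_spec {A B : T} (f : A ⟶ B) :
    (wdec C A).π ≫ wmap C f = f ≫ (wdec C B).π :=
  (B1exist (wdec C A) (wdec C B).hb (f ≫ (wdec C B).π)).choose_spec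

noncomputable def zmap {A B : T} (f : A ⟶ B) : (zdec C A).a ⟶ (zdec C B).a :=
  (B2exist (zdec C B) (zdec C A).ha ((zdec C A).ι ≫ wmap C f)).choose

lemma zmap_spec {A B : T} (f : A ⟶ B) :
    zmap C f ≫ (zdec C B).ι = (zdec C A).ι ≫ wmap C f :=
  (B2exist (zdec C B) (zdec C A).ha ((zdec C A).ι ≫ wmap C f)).choose_spec

lemma wmap_id (A : T) : wmap C (𝟙 A) = 𝟙 (wdec C A).b := by
  apply B1uniq (wdec C A) (wdec C A).hb C.hXsh
  rw [wmap_spec, Category.id_comp, Category.comp_id]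

lemma wmap_comp {A B D : T} (f : A ⟶ B) (g : B ⟶ D) :
    wmap C (f ≫ g) = wmap C f ≫ wmap C g := by
  apply B1uniq (wdec C A) (wdec C D).hb C.hXsh
  calc (wdec C A).π ≫ wmap C (f ≫ g) = (f ≫ g) ≫ (wdec C D).π := wmap_spec C (f ≫ g)
    _ = f ≫ (g ≫ (wdec C D).π) := Category.assoc _ _ _
    _ = f ≫ ((wdec C B).π ≫ wmap C g) := by rw [wmap_spec]
    _ = (f ≫ (wdec C B).π) ≫ wmap C g := (Category.assoc _ _ _).symm
    _ = ((wdec C A).π ≫ wmap C f) ≫ wmap C g := by rw [wmap_spec]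
    _ = (wdec C A).π ≫ wmap C f ≫ wmap C g := Category.assoc _ _ _

lemma zmap_id (A : T) : zmap C (𝟙 A) = 𝟙 (zdec C A).a := by
  apply B2uniq (zdec C A) (zdec C A).ha C.hYsh
  rw [zmap_spec, wmap_id, Category.id_comp, Category.comp_id]

lemma zmap_comp {A B D : T} (f : A ⟶ B) (g : B ⟶ D) :
    zmap C (f ≫ g) = zmap C f ≫ zmap C g := by
  apply B2uniq (zdec C D) (zdec C A).ha C.hYsh
  calc zmap C (f ≫ g) ≫ (zdec C D).ι = (zdec C A).ι ≫ wmap C (f ≫ g) := zmap_spec C (f ≫ g)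
    _ = (zdec C A).ι ≫ wmap C f ≫ wmap C g := by rw [wmap_comp]
    _ = ((zdec C A).ι ≫ wmap C f) ≫ wmap C g := (Category.assoc _ _ _).symm
    _ = (zmap C f ≫ (zdec C B).ι) ≫ wmap C g := by rw [zmap_spec]
    _ = zmap C f ≫ ((zdec C B).ι ≫ wmap C g) := Category.assoc _ _ _
    _ = zmap C f ≫ (zmap C g ≫ (zdec C D).ι) := by rw [zmap_spec]
    _ = (zmap C f ≫ zmap C g) ≫ (zdec C D).ι := (Category.assoc _ _ _).symm

/-- The functor `A ↦ wA`. -/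
noncomputable def Wfun : T ⥤ T where
  obj A := (wdec C A).b
  map f := wmap C f
  map_id := wmap_id C
  map_comp := wmap_comp C

/-- The functor `A ↦ zA` into the middle subcategory. -/
noncomputable def Ffun : T ⥤ ObjectProperty.FullSubcategory (fun A : T => A ∈ rightPerp X ∩ leftPerp Y) where
  obj A := ⟨(zdec C A).a, zmemZ C A⟩
  map f := ObjectProperty.homMk (zmap C f)
  map_id A := ObjectProperty.hom_ext _ (zmap_id C A)
  map_comp f g := ObjectProperty.hom_ext _ (zmap_comp C f g)

noncomputable def βNat : 𝟭 T ⟶ Wfun C where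
  app A := (wdec C A).π
  naturality _ _ f := (wmap_spec C f).symm

noncomputable def uNat :
    Ffun C ⋙ ObjectProperty.ι (fun A : T => A ∈ rightPerp X ∩ leftPerp Y) ⟶ Wfun C where
  app A := (zdec C A).ι
  naturality _ _ f := zmap_spec C f

end Constr


section Invert

variable {X Y : Set T} (C : Setup X Y)

lemma postcomp_bij_of_isIso {A B : T} (f : A ⟶ B) (hf : IsIso (wmap C f)) (z : T) :
    Function.Bijective (fun φ : z ⟶ (wdec C A).b => φ ≫ wmap C f) := by
  constructor
  · intro a b h
    dsimp at h
    rwa [cancel_mono (wmap C f)] at h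
  · intro ψ
    exact ⟨ψ ≫ inv (wmap C f), by simp⟩

lemma zmap_isIso_of_bij {A B : T} (f : A ⟶ B)
    (H : ∀ z : T, z ∈ rightPerp X ∩ leftPerp Y →
      Function.Bijective (fun φ : z ⟶ (wdec C A).b => φ ≫ wmap C f)) :
    IsIso (zmap C f) := by
  have θ : ∀ z : T, z ∈ rightPerp X ∩ leftPerp Y →
      Function.Bijective (fun φ : z ⟶ (zdec C A).a => φ ≫ zmap C f) := by
    intro z hz
    constructor
    · intro a b h
      dsimp at h
      apply B2uniq (zdec C A) hz.2 C.hYsh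
      apply (H z hz).1
      show (a ≫ (zdec C A).ι) ≫ wmap C f = (b ≫ (zdec C A).ι) ≫ wmap C f
      calc (a ≫ (zdec C A).ι) ≫ wmap C f
          = a ≫ ((zdec C A).ι ≫ wmap C f) := Category.assoc _ _ _
        _ = a ≫ (zmap C f ≫ (zdec C B).ι) := by rw [zmap_spec]
        _ = (a ≫ zmap C f) ≫ (zdec C B).ι := (Category.assoc _ _ _).symm
        _ = (b ≫ zmap C f) ≫ (zdec C B).ι := by rw [h]
        _ = b ≫ (zmap C f ≫ (zdec C B).ι) := Category.assoc _ _ _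
        _ = b ≫ ((zdec C A).ι ≫ wmap C f) := by rw [zmap_spec]
        _ = (b ≫ (zdec C A).ι) ≫ wmap C f := (Category.assoc _ _ _).symm
    · intro ψ
      obtain ⟨χ, hχ⟩ := (H z hz).2 (ψ ≫ (zdec C B).ι)
      obtain ⟨φ, hφ⟩ := B2exist (zdec C A) hz.2 χ
      refine ⟨φ, B2uniq (zdec C B) hz.2 C.hYsh ?_⟩
      dsimp at hχ
      calc (φ ≫ zmap C f) ≫ (zdec C B).ι
          = φ ≫ (zmap C f ≫ (zdec C B).ι) := Category.assoc _ _ _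
        _ = φ ≫ ((zdec C A).ι ≫ wmap C f) := by rw [zmap_spec]
        _ = (φ ≫ (zdec C A).ι) ≫ wmap C f := (Category.assoc _ _ _).symm
        _ = χ ≫ wmap C f := by rw [hφ]
        _ = ψ ≫ (zdec C B).ι := hχ
  obtain ⟨σ, hσ⟩ := (θ _ (zmemZ C B)).2 (𝟙 _)
  dsimp at hσ
  refine ⟨σ, ?_, hσ⟩
  apply (θ _ (zmemZ C A)).1
  show (zmap C f ≫ σ) ≫ zmap C f = 𝟙 _ ≫ zmap C f
  rw [Category.assoc, hσ, Category.comp_id, Category.id_comp]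

lemma wmap_isIso_of_bij {A B : T} (f : A ⟶ B)
    (H : ∀ w' : T, w' ∈ rightPerp X → Function.Bijective (fun b : B ⟶ w' => f ≫ b)) :
    IsIso (wmap C f) := by
  have bij : ∀ w' : T, w' ∈ rightPerp X →
      Function.Bijective (fun ψ : (wdec C B).b ⟶ w' => wmap C f ≫ ψ) := by
    intro w' hw'
    constructor
    · intro a b h
      dsimp at h
      apply B1uniq (wdec C B) hw' C.hXsh
      apply (H w' hw').1
      show f ≫ ((wdec C B).π ≫ a) = f ≫ ((wdec C B).π ≫ b)
      calc f ≫ ((wdec C B).π ≫ a)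
          = (f ≫ (wdec C B).π) ≫ a := (Category.assoc _ _ _).symm
        _ = ((wdec C A).π ≫ wmap C f) ≫ a := by rw [wmap_spec]
        _ = (wdec C A).π ≫ (wmap C f ≫ a) := Category.assoc _ _ _
        _ = (wdec C A).π ≫ (wmap C f ≫ b) := by rw [h]
        _ = ((wdec C A).π ≫ wmap C f) ≫ b := (Category.assoc _ _ _).symm
        _ = (f ≫ (wdec C B).π) ≫ b := by rw [wmap_spec]
        _ = f ≫ ((wdec C B).π ≫ b) := Category.assoc _ _ _
    · intro χ
      obtain ⟨b, hb⟩ := (H w' hw').2 ((wdec C A).π ≫ χ)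
      obtain ⟨ψ, hψ⟩ := B1exist (wdec C B) hw' b
      refine ⟨ψ, B1uniq (wdec C A) hw' C.hXsh ?_⟩
      dsimp at hb
      calc (wdec C A).π ≫ (wmap C f ≫ ψ)
          = ((wdec C A).π ≫ wmap C f) ≫ ψ := (Category.assoc _ _ _).symm
        _ = (f ≫ (wdec C B).π) ≫ ψ := by rw [wmap_spec]
        _ = f ≫ ((wdec C B).π ≫ ψ) := Category.assoc _ _ _
        _ = f ≫ b := by rw [hψ]
        _ = (wdec C A).π ≫ χ := hb
  obtain ⟨σ, hσ⟩ := (bij _ (wdec C A).hb).2 (𝟙 _)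
  dsimp at hσ
  refine ⟨σ, hσ, ?_⟩
  apply (bij _ (wdec C B).hb).1
  show wmap C f ≫ (σ ≫ wmap C f) = wmap C f ≫ 𝟙 _
  rw [← Category.assoc, hσ, Category.id_comp, Category.comp_id]

end Invert


section Exactness

variable {P₁ P₂ P₃ Z' : T} {f₁ : P₁ ⟶ P₂} {f₂ : P₂ ⟶ P₃} {f₃ : P₃ ⟶ P₁⟦(1:ℤ)⟧}

lemma rotmk (hT : Triangle.mk f₁ f₂ f₃ ∈ distTriang T) :
    Triangle.mk f₂ f₃ (-(shiftFunctor T (1:ℤ)).map f₁) ∈ distTriang T :=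
  rot_of_distTriang _ hT

lemma cy₂ (hT : Triangle.mk f₁ f₂ f₃ ∈ distTriang T) (g : Z' ⟶ P₂) (hg : g ≫ f₂ = 0) :
    ∃ g' : Z' ⟶ P₁, g = g' ≫ f₁ := by
  obtain ⟨g', hg'⟩ := Triangle.coyoneda_exact₂ _ hT g hg
  exact ⟨g', hg'⟩

lemma cy₃ (hT : Triangle.mk f₁ f₂ f₃ ∈ distTriang T) (g : Z' ⟶ P₃) (hg : g ≫ f₃ = 0) :
    ∃ g' : Z' ⟶ P₂, g = g' ≫ f₂ := by
  obtain ⟨g', hg'⟩ := Triangle.coyoneda_exact₃ _ hT g hg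
  exact ⟨g', hg'⟩

lemma yo₂ (hT : Triangle.mk f₁ f₂ f₃ ∈ distTriang T) (g : P₂ ⟶ Z') (hg : f₁ ≫ g = 0) :
    ∃ g' : P₃ ⟶ Z', g = f₂ ≫ g' := by
  obtain ⟨g', hg'⟩ := Triangle.yoneda_exact₂ _ hT g hg
  exact ⟨g', hg'⟩

lemma yo₃ (hT : Triangle.mk f₁ f₂ f₃ ∈ distTriang T) (g : P₃ ⟶ Z') (hg : f₂ ≫ g = 0) :
    ∃ g' : (P₁⟦(1:ℤ)⟧ : T) ⟶ Z', g = f₃ ≫ g' := by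
  obtain ⟨g', hg'⟩ := Triangle.yoneda_exact₃ _ hT g hg
  exact ⟨g', hg'⟩

lemma zero_of_comp_fiber (hT : Triangle.mk f₁ f₂ f₃ ∈ distTriang T) (g : Z' ⟶ P₁)
    (hg : g ≫ f₁ = 0) (hzero : ∀ u : Z' ⟶ (P₃⟦(-1:ℤ)⟧ : T), u = 0) : g = 0 := by
  obtain ⟨g', hg'⟩ := Triangle.coyoneda_exact₂ _ (inv_rot_of_distTriang _ hT) g
    hg
  have := hzero g'
  subst this
  exact hg'.trans zero_comp

lemma zz₁₂ (hT : Triangle.mk f₁ f₂ f₃ ∈ distTriang T) : f₁ ≫ f₂ = 0 :=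
  comp_distTriang_mor_zero₁₂ _ hT

lemma zz₂₃ (hT : Triangle.mk f₁ f₂ f₃ ∈ distTriang T) : f₂ ≫ f₃ = 0 :=
  comp_distTriang_mor_zero₂₃ _ hT

lemma zz₃₁ (hT : Triangle.mk f₁ f₂ f₃ ∈ distTriang T) :
    f₃ ≫ (shiftFunctor T (1:ℤ)).map f₁ = 0 :=
  comp_distTriang_mor_zero₃₁ _ hT

end Exactness


section ConeY

variable {X Y : Set T} (C : Setup X Y)

lemma coneY_bij {A B : T} (f : A ⟶ B) {y₀ : T} (hy₀ : y₀ ∈ Y)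
    (g₀ : B ⟶ y₀) (h₀ : y₀ ⟶ A⟦(1:ℤ)⟧) (hΔf : Triangle.mk f g₀ h₀ ∈ distTriang T) :
    ∀ z : T, z ∈ rightPerp X ∩ leftPerp Y →
      Function.Bijective (fun φ : z ⟶ (wdec C A).b => φ ≫ wmap C f) := by
  obtain ⟨wstar, βs, γs, hDs⟩ := distinguished_cocone_triangle ((wdec C A).ι ≫ f)
  have h31 : γs ≫ (shiftFunctor T (1:ℤ)).map ((wdec C A).ι ≫ f) = 0 := zz₃₁ hDs
  have hrr_f := rotmk (rotmk hΔf)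
  have hrr_A := rotmk (rotmk (wdec C A).mem)
  have hws : wstar ∈ rightPerp X := by
    intro x hx m
    have hb : ((m ≫ γs) ≫ (shiftFunctor T (1:ℤ)).map (wdec C A).ι) ≫
        (shiftFunctor T (1:ℤ)).map f = 0 := by
      rw [Category.assoc, Category.assoc, ← Functor.map_comp, h31, comp_zero]
    obtain ⟨g', hg'⟩ := cy₂ hrr_f ((m ≫ γs) ≫ (shiftFunctor T (1:ℤ)).map (wdec C A).ι)
      (by rw [Preadditive.comp_neg, hb, neg_zero])
    have hbig : (m ≫ γs) ≫ (shiftFunctor T (1:ℤ)).map (wdec C A).ι = 0 := by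
      rw [hg', C.orth x hx y₀ hy₀ g', zero_comp]
    obtain ⟨φ₀, hφ₀⟩ := cy₂ hrr_A (m ≫ γs) (by rw [Preadditive.comp_neg, hbig, neg_zero])
    have ho0 : m ≫ γs = 0 := by rw [hφ₀, (wdec C A).hb x hx φ₀, zero_comp]
    obtain ⟨m'', hm''⟩ := cy₃ hDs m ho0
    obtain ⟨a', ha'⟩ := cy₂ hΔf m'' (C.orth x hx y₀ hy₀ _)
    obtain ⟨ρ₁, hρ₁⟩ := cy₂ (wdec C A).mem a' ((wdec C A).hb x hx _)
    rw [hm'', ha', hρ₁, Category.assoc, Category.assoc,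
      ← Category.assoc (wdec C A).ι f βs, zz₁₂ hDs, comp_zero]
  obtain ⟨ω, hω1, hω2⟩ : ∃ ω : (wdec C A).b ⟶ wstar, (wdec C A).π ≫ ω = f ≫ βs ∧
      (wdec C A).δ ≫ (shiftFunctor T (1:ℤ)).map (𝟙 (wdec C A).a) = ω ≫ γs :=
    complete_distinguished_triangle_morphism
    (Triangle.mk (wdec C A).ι (wdec C A).π (wdec C A).δ) (Triangle.mk ((wdec C A).ι ≫ f) βs γs)
    (wdec C A).mem hDs (𝟙 (wdec C A).a) f (Category.id_comp _).symm
  rw [CategoryTheory.Functor.map_id, Category.comp_id] at hω2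
  obtain ⟨ρ, hρ⟩ := B1exist
    (⟨_, _, (wdec C A).ha, hws, (wdec C A).ι ≫ f, βs, γs, hDs⟩ : Dec X (rightPerp X) B)
    (wdec C B).hb (wdec C B).π
  dsimp at hρ
  obtain ⟨ρ', hρ'⟩ := B1exist (wdec C B) hws βs
  have hρρ' : ρ ≫ ρ' = 𝟙 wstar := by
    apply B1uniq
      (⟨_, _, (wdec C A).ha, hws, (wdec C A).ι ≫ f, βs, γs, hDs⟩ : Dec X (rightPerp X) B)
      hws C.hXsh
    show βs ≫ (ρ ≫ ρ') = βs ≫ 𝟙 wstar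
    rw [← Category.assoc, hρ, hρ', Category.comp_id]
  have hρ'ρ : ρ' ≫ ρ = 𝟙 (wdec C B).b := by
    apply B1uniq (wdec C B) (wdec C B).hb C.hXsh
    show (wdec C B).π ≫ (ρ' ≫ ρ) = (wdec C B).π ≫ 𝟙 _
    rw [← Category.assoc, hρ', hρ, Category.comp_id]
  have hwf : wmap C f = ω ≫ ρ := by
    apply B1uniq (wdec C A) (wdec C B).hb C.hXsh
    rw [wmap_spec]
    show f ≫ (wdec C B).π = (wdec C A).π ≫ (ω ≫ ρ)
    rw [← Category.assoc, hω1, Category.assoc, hρ]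
  intro z hz
  have key : Function.Bijective (fun φ : z ⟶ (wdec C A).b => φ ≫ ω) := by
    constructor
    · intro p q hpq
      dsimp at hpq
      have hsub : (p - q) ≫ ω = 0 := by rw [Preadditive.sub_comp, hpq, sub_self]
      have hzero : p - q = 0 := by
        have hγ : (p - q) ≫ (wdec C A).δ = 0 := by
          rw [hω2, ← Category.assoc, hsub, zero_comp]
        obtain ⟨φ', hφ'⟩ := cy₃ (wdec C A).mem (p - q) hγ
        have h2 : (φ' ≫ f) ≫ βs = 0 := by
          rw [Category.assoc, ← hω1, ← Category.assoc, ← hφ', hsub]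
        obtain ⟨ρ₀, hρ₀⟩ := cy₂ hDs (φ' ≫ f) h2
        have hζ : (φ' - ρ₀ ≫ (wdec C A).ι) ≫ f = 0 := by
          rw [Preadditive.sub_comp, Category.assoc, ← hρ₀]
          exact sub_self _
        have hφ'' : φ' - ρ₀ ≫ (wdec C A).ι = 0 :=
          zero_of_comp_fiber hΔf _ hζ (fun u => hz.2 _ (C.hYsh y₀ hy₀ (-1)) u)
        have hφ3 : φ' = ρ₀ ≫ (wdec C A).ι := sub_eq_zero.mp hφ''
        rw [hφ', hφ3, Category.assoc, zz₁₂ (wdec C A).mem, comp_zero]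
      exact sub_eq_zero.mp hzero
    · intro ψ
      have ho1 : ((ψ ≫ γs) ≫ (shiftFunctor T (1:ℤ)).map (wdec C A).ι) ≫
          (shiftFunctor T (1:ℤ)).map f = 0 := by
        rw [Category.assoc, Category.assoc, ← Functor.map_comp, h31, comp_zero]
      obtain ⟨g', hg'⟩ := cy₂ hrr_f ((ψ ≫ γs) ≫ (shiftFunctor T (1:ℤ)).map (wdec C A).ι)
        (by rw [Preadditive.comp_neg, ho1, neg_zero])
      have ho10 : (ψ ≫ γs) ≫ (shiftFunctor T (1:ℤ)).map (wdec C A).ι = 0 := by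
        rw [hg', hz.2 y₀ hy₀ g', zero_comp]
      obtain ⟨φ₀, hφ₀⟩ := cy₂ hrr_A (ψ ≫ γs) (by rw [Preadditive.comp_neg, ho10, neg_zero])
      have hsub : (ψ - φ₀ ≫ ω) ≫ γs = 0 := by
        rw [Preadditive.sub_comp, Category.assoc, ← hω2, hφ₀]
        exact sub_self _
      obtain ⟨b, hb⟩ := cy₃ hDs (ψ - φ₀ ≫ ω) hsub
      obtain ⟨a, ha⟩ := cy₂ hΔf b (hz.2 y₀ hy₀ _)
      refine ⟨φ₀ + a ≫ (wdec C A).π, ?_⟩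
      dsimp
      rw [Preadditive.add_comp, Category.assoc, hω1, ← Category.assoc, ← ha, ← hb]
      abel
  have heq : (fun φ : z ⟶ (wdec C A).b => φ ≫ wmap C f)
      = (fun φ : z ⟶ (wdec C A).b => (φ ≫ ω) ≫ ρ) := by
    funext φ; rw [hwf, ← Category.assoc]
  rw [heq]
  have hρbij : Function.Bijective (fun χ : z ⟶ wstar => χ ≫ ρ) := by
    constructor
    · intro a b h
      dsimp at h
      have h2 : a ≫ (ρ ≫ ρ') = b ≫ (ρ ≫ ρ') := by
        rw [← Category.assoc, h, Category.assoc]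
      rw [hρρ', Category.comp_id, Category.comp_id] at h2
      exact h2
    · intro χ
      refine ⟨χ ≫ ρ', ?_⟩
      dsimp
      rw [Category.assoc, hρ'ρ, Category.comp_id]
  exact hρbij.comp key

end ConeY


section MainInv

variable {X Y : Set T} (C : Setup X Y)

lemma zmap_isIso_of_qis {A B : T} (f : A ⟶ B) {s : T} (g : B ⟶ s) (h : s ⟶ A⟦(1:ℤ)⟧)
    (hΔ : Triangle.mk f g h ∈ distTriang T) (hs : s ∈ starSet X Y) :
    IsIso (zmap C f) := by
  obtain ⟨xs, ys, hxs, hys, p, q, r, hΔs⟩ := hs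
  obtain ⟨E, e, d, hΔE⟩ := distinguished_cocone_triangle₁ (g ≫ q)
  obtain ⟨k, hk1, hk2⟩ : ∃ k : (A⟦(1:ℤ)⟧ : T) ⟶ E⟦(1:ℤ)⟧, h ≫ k = q ≫ d ∧
      (-(shiftFunctor T (1:ℤ)).map f) ≫ (shiftFunctor T (1:ℤ)).map (𝟙 B) =
        k ≫ (-(shiftFunctor T (1:ℤ)).map e) :=
    complete_distinguished_triangle_morphism
    (Triangle.mk g h (-(shiftFunctor T (1:ℤ)).map f))
    (Triangle.mk (g ≫ q) d (-(shiftFunctor T (1:ℤ)).map e))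
    (rotmk hΔ) (rotmk hΔE) (𝟙 B) q (Category.id_comp _).symm
  rw [CategoryTheory.Functor.map_id, Category.comp_id] at hk2
  have hk2' : k ≫ (shiftFunctor T (1:ℤ)).map e = (shiftFunctor T (1:ℤ)).map f := by
    rw [Preadditive.comp_neg] at hk2
    exact (neg_inj.mp hk2).symm
  set f₁ := (shiftFunctor T (1:ℤ)).preimage k with hf₁def
  have hf₁ : (shiftFunctor T (1:ℤ)).map f₁ = k := Functor.map_preimage _ k
  have hf₁e : f₁ ≫ e = f := by
    apply (shiftFunctor T (1:ℤ)).map_injective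
    rw [Functor.map_comp, hf₁, hk2']
  have Hk : ∀ w'' : T, w'' ∈ rightPerp X → Function.Bijective
      (fun b' : (E⟦(1:ℤ)⟧ : T) ⟶ w'' => k ≫ b') := by
    intro w'' hw''
    constructor
    · intro b₁ b₂ hbb
      dsimp at hbb
      have hker : ∀ b' : (E⟦(1:ℤ)⟧ : T) ⟶ w'', k ≫ b' = 0 → b' = 0 := by
        intro b' hb'
        have hq0 : q ≫ (d ≫ b') = 0 := by
          rw [← Category.assoc, ← hk1, Category.assoc, hb', comp_zero]
        obtain ⟨χ, hχ⟩ := yo₂ (rotmk hΔs) (d ≫ b') hq0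
        have hdb : d ≫ b' = 0 := by rw [hχ, hw'' _ (C.hXsh xs hxs 1) χ, comp_zero]
        obtain ⟨m', hm'⟩ := yo₃ (rotmk hΔE) b' hdb
        have hfm : (shiftFunctor T (1:ℤ)).map f ≫ m' = 0 := by
          have h5 : k ≫ ((-(shiftFunctor T (1:ℤ)).map e) ≫ m') = 0 := by rw [← hm', hb']
          rw [← Category.assoc, Preadditive.comp_neg, Preadditive.neg_comp, hk2'] at h5
          exact neg_eq_zero.mp h5
        obtain ⟨m'', hm''⟩ := yo₃ (rotmk (rotmk hΔ)) m'
          (by rw [Preadditive.neg_comp, hfm, neg_zero])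
        obtain ⟨c'', hc''⟩ := yo₃ (rotmk (rotmk hΔs)) m''
          (by rw [Preadditive.neg_comp,
            hw'' _ (C.hXsh xs hxs 1) ((shiftFunctor T (1:ℤ)).map p ≫ m''), neg_zero])
        rw [hm', hm'', hc'']
        have hegq : e ≫ g ≫ q = 0 := zz₁₂ hΔE
        have hcomp : (shiftFunctor T (1:ℤ)).map e ≫ (shiftFunctor T (1:ℤ)).map g ≫
            (shiftFunctor T (1:ℤ)).map q ≫ c'' = 0 := by
          rw [← Category.assoc, ← Category.assoc, ← Functor.map_comp, ← Functor.map_comp,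
            Category.assoc e g q, hegq, Functor.map_zero, zero_comp]
        simpa only [Preadditive.neg_comp, Preadditive.comp_neg, neg_neg, neg_eq_zero]
          using hcomp
      have := hker (b₁ - b₂) (by rw [Preadditive.comp_sub, hbb, sub_self])
      exact sub_eq_zero.mp this
    · intro a'
      obtain ⟨c, hc⟩ := yo₂ hΔs (h ≫ a') (hw'' _ hxs _)
      have htc : (g ≫ q) ≫ c = 0 := by
        rw [Category.assoc, ← hc, ← Category.assoc, zz₂₃ hΔ, zero_comp]
      obtain ⟨b₀, hb₀⟩ := yo₃ hΔE c htc
      have hha : h ≫ (a' - k ≫ b₀) = 0 := by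
        rw [Preadditive.comp_sub, hc, ← Category.assoc, hk1, Category.assoc, ← hb₀, sub_self]
      obtain ⟨m', hm'⟩ := yo₃ (rotmk hΔ) (a' - k ≫ b₀) hha
      refine ⟨b₀ - (shiftFunctor T (1:ℤ)).map e ≫ m', ?_⟩
      dsimp
      rw [Preadditive.comp_sub, ← Category.assoc, hk2']
      have h6 : (shiftFunctor T (1:ℤ)).map f ≫ m' = k ≫ b₀ - a' := by
        rw [Preadditive.neg_comp] at hm'
        rw [← neg_inj, ← hm', neg_sub]
      rw [h6]
      exact sub_sub_cancel _ _
  have HX : ∀ w' : T, w' ∈ rightPerp X → Function.Bijective (fun b : E ⟶ w' => f₁ ≫ b) := by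
    intro w' hw'
    have hb := Hk (w'⟦(1:ℤ)⟧) (rightPerp_shift C.hXsh w' hw' 1)
    constructor
    · intro b₁ b₂ hbb
      dsimp at hbb
      apply (shiftFunctor T (1:ℤ)).map_injective
      apply hb.1
      show k ≫ (shiftFunctor T (1:ℤ)).map b₁ = k ≫ (shiftFunctor T (1:ℤ)).map b₂
      rw [← hf₁, ← Functor.map_comp, ← Functor.map_comp, hbb]
    · intro a
      obtain ⟨b', hb'⟩ := hb.2 ((shiftFunctor T (1:ℤ)).map a)
      dsimp at hb'
      refine ⟨(shiftFunctor T (1:ℤ)).preimage b', ?_⟩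
      dsimp
      apply (shiftFunctor T (1:ℤ)).map_injective
      rw [Functor.map_comp, hf₁, Functor.map_preimage, hb']
  have hwiso : IsIso (wmap C f₁) := wmap_isIso_of_bij C f₁ HX
  have hziso₁ : IsIso (zmap C f₁) :=
    zmap_isIso_of_bij C f₁ (fun z _ => postcomp_bij_of_isIso C f₁ hwiso z)
  have hziso₂ : IsIso (zmap C e) :=
    zmap_isIso_of_bij C e (coneY_bij C e hys (g ≫ q) d hΔE)
  have hcompose : zmap C f = zmap C f₁ ≫ zmap C e := by rw [← zmap_comp, hf₁e]
  rw [hcompose]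
  exact IsIso.comp_isIso

end MainInv


section Equiv

variable {X Y : Set T} (C : Setup X Y)

noncomputable def rz {z : T} (hz : z ∈ rightPerp X) : (wdec C z).b ⟶ z :=
  (B1exist (wdec C z) hz (𝟙 z)).choose

lemma rz_spec {z : T} (hz : z ∈ rightPerp X) : (wdec C z).π ≫ rz C hz = 𝟙 z :=
  (B1exist (wdec C z) hz (𝟙 z)).choose_spec

lemma rz_spec2 {z : T} (hz : z ∈ rightPerp X) : rz C hz ≫ (wdec C z).π = 𝟙 (wdec C z).b := by
  apply B1uniq (wdec C z) (wdec C z).hb C.hXsh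
  rw [← Category.assoc, rz_spec, Category.id_comp, Category.comp_id]

lemma wz_mem_leftPerp {z : T} (hzr : z ∈ rightPerp X) (hzl : z ∈ leftPerp Y) :
    (wdec C z).b ∈ leftPerp Y := by
  intro y hy f
  have h1 : (rz C hzr ≫ (wdec C z).π) ≫ f = f := by rw [rz_spec2, Category.id_comp]
  rw [← h1, Category.assoc, hzl y hy ((wdec C z).π ≫ f), comp_zero]

noncomputable def sz {z : T} (hw : (wdec C z).b ∈ leftPerp Y) :
    (wdec C z).b ⟶ (zdec C z).a :=
  (B2exist (zdec C z) hw (𝟙 _)).choose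

lemma sz_spec {z : T} (hw : (wdec C z).b ∈ leftPerp Y) :
    sz C hw ≫ (zdec C z).ι = 𝟙 (wdec C z).b :=
  (B2exist (zdec C z) hw (𝟙 _)).choose_spec

lemma sz_spec2 {z : T} (hw : (wdec C z).b ∈ leftPerp Y) :
    (zdec C z).ι ≫ sz C hw = 𝟙 (zdec C z).a := by
  apply B2uniq (zdec C z) (zdec C z).ha C.hYsh
  rw [Category.assoc, sz_spec, Category.comp_id, Category.id_comp]

noncomputable def nuAppT (W : ObjectProperty.FullSubcategory (fun A : T => A ∈ rightPerp X ∩ leftPerp Y)) :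
    ((zdec C W.obj).a : T) ≅ W.obj where
  hom := (zdec C W.obj).ι ≫ rz C W.property.1
  inv := (wdec C W.obj).π ≫ sz C (wz_mem_leftPerp C W.property.1 W.property.2)
  hom_inv_id := by
    rw [Category.assoc, ← Category.assoc (rz C W.property.1), rz_spec2,
      Category.id_comp, sz_spec2]
  inv_hom_id := by
    rw [Category.assoc, ← Category.assoc
      (sz C (wz_mem_leftPerp C W.property.1 W.property.2)), sz_spec,
      Category.id_comp, rz_spec]

noncomputable def nuApp (W : ObjectProperty.FullSubcategory (fun A : T => A ∈ rightPerp X ∩ leftPerp Y)) :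
    (Ffun C).obj W.obj ≅ W :=
  (ObjectProperty.fullyFaithfulι (P := _)).preimageIso (nuAppT C W)

noncomputable def nuIso :
    ObjectProperty.ι (fun A : T => A ∈ rightPerp X ∩ leftPerp Y) ⋙ Ffun C
      ≅ 𝟭 (ObjectProperty.FullSubcategory (fun A : T => A ∈ rightPerp X ∩ leftPerp Y)) :=
  NatIso.ofComponents (fun W => nuApp C W)
    (fun {W W'} f => by
      have h1 : wmap C f.hom ≫ rz C W'.property.1 = rz C W.property.1 ≫ f.hom := by
        apply B1uniq (wdec C W.obj) W'.property.1 C.hXsh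
        rw [← Category.assoc, wmap_spec, Category.assoc, rz_spec, Category.comp_id,
          ← Category.assoc, rz_spec, Category.id_comp]
      apply ObjectProperty.hom_ext
      show zmap C f.hom ≫ ((zdec C W'.obj).ι ≫ rz C W'.property.1)
          = ((zdec C W.obj).ι ≫ rz C W.property.1) ≫ f.hom
      rw [← Category.assoc, zmap_spec, Category.assoc, h1, ← Category.assoc])

lemma Ffun_inverts {S : Set T} (hS2 : ∀ s ∈ S, s ∈ starSet X Y) :
    (qis S).IsInvertedBy (Ffun C) := by
  intro A B f hf
  obtain ⟨s, g, h, hΔ, hsS⟩ := hf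
  have hI : IsIso (zmap C f) := zmap_isIso_of_qis C f g h hΔ (hS2 s hsS)
  obtain ⟨σ, hσ1, hσ2⟩ := hI.out
  exact ⟨⟨ObjectProperty.homMk σ, ObjectProperty.hom_ext _ hσ1, ObjectProperty.hom_ext _ hσ2⟩⟩

lemma qis_pi {S : Set T} (hXS : X ⊆ S) (A : T) : qis S ((wdec C A).π) :=
  ⟨(wdec C A).a⟦(1:ℤ)⟧, (wdec C A).δ, -(shiftFunctor T (1:ℤ)).map (wdec C A).ι,
    rotmk (wdec C A).mem, hXS (C.hXsh _ (wdec C A).ha 1)⟩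

lemma qis_iota {S : Set T} (hYS : Y ⊆ S) (A : T) : qis S ((zdec C A).ι) :=
  ⟨(zdec C A).b, (zdec C A).π, (zdec C A).δ, (zdec C A).mem, hYS (zdec C A).hb⟩

include C in
lemma final_equivalence {U : Type*} [Category U] (S : Set T) (Q : T ⥤ U)
    [Q.IsLocalization (qis S)] (hS2 : ∀ s ∈ S, s ∈ starSet X Y)
    (hXS : X ⊆ S) (hYS : Y ⊆ S) :
    (ObjectProperty.ι (fun A : T => A ∈ rightPerp X ∩ leftPerp Y) ⋙ Q).IsEquivalence := by
  have hinv : (qis S).IsInvertedBy (Ffun C) := Ffun_inverts C hS2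
  let G : U ⥤ ObjectProperty.FullSubcategory (fun A : T => A ∈ rightPerp X ∩ leftPerp Y) :=
    Localization.lift (Ffun C) hinv Q
  have e₁ : Q ⋙ G ≅ Ffun C := Localization.fac (Ffun C) hinv Q
  let unitIso : 𝟭 (ObjectProperty.FullSubcategory (fun A : T => A ∈ rightPerp X ∩ leftPerp Y)) ≅
      (ObjectProperty.ι (fun A : T => A ∈ rightPerp X ∩ leftPerp Y) ⋙ Q) ⋙ G :=
    ((Functor.isoWhiskerLeft (ObjectProperty.ι
      (fun A : T => A ∈ rightPerp X ∩ leftPerp Y)) e₁) ≪≫ nuIso C).symm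
  let τ₁ := Functor.whiskerRight (uNat C) Q
  haveI : ∀ A, IsIso (τ₁.app A) := fun A =>
    Localization.inverts Q (qis S) _ (qis_iota C hYS A)
  haveI : IsIso τ₁ := NatIso.isIso_of_isIso_app τ₁
  let τ₂ := Functor.whiskerRight (βNat C) Q
  haveI : ∀ A, IsIso (τ₂.app A) := fun A =>
    Localization.inverts Q (qis S) _ (qis_pi C hXS A)
  haveI : IsIso τ₂ := NatIso.isIso_of_isIso_app τ₂
  let eQ : (Ffun C ⋙ ObjectProperty.ι
      (fun A : T => A ∈ rightPerp X ∩ leftPerp Y)) ⋙ Q ≅ Q :=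
    asIso τ₁ ≪≫ (asIso τ₂).symm ≪≫ Functor.leftUnitor Q
  letI : Localization.Lifting Q (qis S)
      ((Ffun C ⋙ ObjectProperty.ι (fun A : T => A ∈ rightPerp X ∩ leftPerp Y)) ⋙ Q)
      (G ⋙ (ObjectProperty.ι (fun A : T => A ∈ rightPerp X ∩ leftPerp Y) ⋙ Q)) :=
    ⟨Functor.isoWhiskerRight e₁ (ObjectProperty.ι
      (fun A : T => A ∈ rightPerp X ∩ leftPerp Y) ⋙ Q)⟩
  letI : Localization.Lifting Q (qis S) Q (𝟭 U) := ⟨Q.rightUnitor⟩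
  let counitIso : (G ⋙ (ObjectProperty.ι
      (fun A : T => A ∈ rightPerp X ∩ leftPerp Y) ⋙ Q)) ≅ 𝟭 U :=
    Localization.liftNatIso Q (qis S)
      ((Ffun C ⋙ ObjectProperty.ι (fun A : T => A ∈ rightPerp X ∩ leftPerp Y)) ⋙ Q) Q
      (G ⋙ (ObjectProperty.ι (fun A : T => A ∈ rightPerp X ∩ leftPerp Y) ⋙ Q)) (𝟭 U) eQ
  exact (CategoryTheory.Equivalence.mk (ObjectProperty.ι
    (fun A : T => A ∈ rightPerp X ∩ leftPerp Y) ⋙ Q) G unitIso counitIso).isEquivalence_functor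

end Equiv


/-- If `S = X ⊥ Y` is a stable t-structure (`X[1] = X`), then `X`, `Y`
and `Z = X^⊥ ∩ ^⊥Y` are thick, `P = X[1] ∩ Y = 0`, `T = X ⊥ Z ⊥ Y` is a weak
semi-orthogonal decomposition, and `Z ⊂ T → T/S` is an equivalence. -/
theorem stmt7 {U : Type*} [Category U] (S X Y : Set T) (Q : T ⥤ U)
    [Q.IsLocalization (qis S)] (hS : IsThick S)
    (h1 : IsTorsionPair S X Y) (hst : shiftSet X 1 = X)
    (h2 : IsTorsionPair Set.univ X (rightPerp X))
    (h3 : IsTorsionPair Set.univ (leftPerp Y) Y) :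
    IsThick X ∧ IsThick Y ∧ IsThick (rightPerp X ∩ leftPerp Y) ∧
    (∀ p ∈ shiftSet X 1 ∩ Y, IsZero p) ∧
    homOrth X (rightPerp X ∩ leftPerp Y) ∧ homOrth X Y ∧
    homOrth (rightPerp X ∩ leftPerp Y) Y ∧
    (∀ T₀ : T, T₀ ∈ starSet X (starSet (rightPerp X ∩ leftPerp Y) Y)) ∧
    (ObjectProperty.ι (fun A => A ∈ rightPerp X ∩ leftPerp Y) ⋙ Q).IsEquivalence := by
  have hXiso : ∀ ⦃a b : T⦄, (a ≅ b) → a ∈ X → b ∈ X := by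
    intro a b e ha
    rw [h1.eqA] at ha ⊢
    exact ⟨leftPerp_iso e ha.1, hS.iso e ha.2⟩
  have hXsh : ∀ x ∈ X, ∀ n : ℤ, (x⟦n⟧ : T) ∈ X := shift_mem_of_one hXiso hst
  have hWsh : ∀ w ∈ rightPerp X, ∀ n : ℤ, (w⟦n⟧ : T) ∈ rightPerp X := rightPerp_shift hXsh
  have hYsh : ∀ y ∈ Y, ∀ n : ℤ, (y⟦n⟧ : T) ∈ Y := by
    intro y hy n
    rw [h1.eqB] at hy ⊢
    exact ⟨hWsh y hy.1 n, hS.shift y hy.2 n⟩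
  have hLsh : ∀ l ∈ leftPerp Y, ∀ n : ℤ, (l⟦n⟧ : T) ∈ leftPerp Y := leftPerp_shift hYsh
  have C : Setup X Y := ⟨hXsh, hYsh, h1.orth, fun A => h2.ext (Set.mem_univ A),
    fun A => h3.ext (Set.mem_univ A)⟩
  refine ⟨?_, ?_, ?_, ?_, ?_, h1.orth, ?_, ?_, ?_⟩
  · -- IsThick X
    constructor
    · rw [h1.eqA]; exact ⟨leftPerp_zero, hS.zero⟩
    · exact hXiso
    · exact hXsh
    · intro Tr hTr hm1 hm3
      rw [h1.eqA] at hm1 hm3 ⊢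
      exact ⟨leftPerp_ext Tr hTr hm1.1 hm3.1, hS.ext₂ Tr hTr hm1.2 hm3.2⟩
    · intro a b i r hir hb
      rw [h1.eqA] at hb ⊢
      exact ⟨leftPerp_retract i r hir hb.1, hS.retract i r hir hb.2⟩
  · -- IsThick Y
    constructor
    · rw [h1.eqB]; exact ⟨rightPerp_zero, hS.zero⟩
    · intro a b e ha
      rw [h1.eqB] at ha ⊢
      exact ⟨rightPerp_iso e ha.1, hS.iso e ha.2⟩
    · exact hYsh
    · intro Tr hTr hm1 hm3
      rw [h1.eqB] at hm1 hm3 ⊢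
      exact ⟨rightPerp_ext Tr hTr hm1.1 hm3.1, hS.ext₂ Tr hTr hm1.2 hm3.2⟩
    · intro a b i r hir hb
      rw [h1.eqB] at hb ⊢
      exact ⟨rightPerp_retract i r hir hb.1, hS.retract i r hir hb.2⟩
  · -- IsThick Z
    constructor
    · exact ⟨rightPerp_zero, leftPerp_zero⟩
    · exact fun a b e ha => ⟨rightPerp_iso e ha.1, leftPerp_iso e ha.2⟩
    · exact fun z hz n => ⟨hWsh z hz.1 n, hLsh z hz.2 n⟩
    · exact fun Tr hTr hm1 hm3 =>
        ⟨rightPerp_ext Tr hTr hm1.1 hm3.1, leftPerp_ext Tr hTr hm1.2 hm3.2⟩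
    · exact fun a b i r hir hb =>
        ⟨rightPerp_retract i r hir hb.1, leftPerp_retract i r hir hb.2⟩
  · -- P = 0
    intro p hp
    have hpX : p ∈ X := by rw [← hst]; exact hp.1
    exact (Limits.IsZero.iff_id_eq_zero p).2 (h1.orth p hpX p hp.2 (𝟙 p))
  · -- homOrth X Z
    exact fun x hx z hz f => hz.1 x hx f
  · -- homOrth Z Y
    exact fun z hz y hy f => hz.2 y hy f
  · -- decomposition
    intro T₀
    obtain ⟨x, w, hx, hw, fx, gw, hw3, hdist⟩ := h2.ext (Set.mem_univ T₀)
    obtain ⟨l, y, hl, hy, u, v, w3, hdist'⟩ := h3.ext (Set.mem_univ w)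
    have hlW : l ∈ rightPerp X := mem_rightPerp_obj₁ hw hy hYsh h1.orth hdist'
    exact ⟨x, w, hx, ⟨l, y, ⟨hlW, hl⟩, hy, u, v, w3, hdist'⟩, fx, gw, hw3, hdist⟩
  · -- the equivalence
    exact final_equivalence C S Q (fun s hs => h1.ext hs) h1.subA h1.subB


end IY
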